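/- Let P_1, ..., P_n be pairwise commuting contractions on a complex Hilbert space H. Then the product P_1 P_2 ⋯ P_n is unitary if and only if each P_i is unitary. -/

import Mathlib

open ContinuousLinearMap Filter
open scoped InnerProductSpace

noncomputable section

private lemma list_prod_norm_le_one
    {H : Type*} [NormedAddCommGroup H] [InnerProductSpace ℂ H]
    (l : List (H →L[ℂ] H)) (h : ∀ x ∈ l, ‖x‖ ≤ 1) : ‖l.prod‖ ≤ 1 := by
  induction l with
  | nil => simpa using (show ‖(1 : H →L[ℂ] H)‖ ≤ 1 from ContinuousLinearMap.norm_id_le)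
  | cons a l ih =>
    rw [List.prod_cons]
    calc ‖a * l.prod‖ ≤ ‖a‖ * ‖l.prod‖ := norm_mul_le _ _
    _ ≤ 1 := by
        have h1 : ‖a‖ ≤ 1 := h a List.mem_cons_self
        have h2 : ‖l.prod‖ ≤ 1 := ih fun x hx => h x (List.mem_cons_of_mem _ hx)
        exact mul_le_one₀ h1 (norm_nonneg _) h2

private lemma isometry_surj_unitary
    {H : Type*} [NormedAddCommGroup H] [InnerProductSpace ℂ H] [CompleteSpace H]
    (P : H →L[ℂ] H) (hiso : ∀ x, ‖P x‖ = ‖x‖) (hsurj : Function.Surjective P) :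
    adjoint P * P = 1 ∧ P * adjoint P = 1 := by
  have h1 : adjoint P * P = 1 := by
    have hz : ((adjoint P * P - 1 : H →L[ℂ] H) : H →ₗ[ℂ] H) = 0 := by
      rw [← inner_map_self_eq_zero]
      intro x
      have hinner : ⟪(adjoint P * P) x, x⟫_ℂ = ⟪P x, P x⟫_ℂ := by
        simp only [ContinuousLinearMap.mul_apply, adjoint_inner_left]
      simp only [ContinuousLinearMap.coe_coe, ContinuousLinearMap.sub_apply,
        ContinuousLinearMap.one_apply, inner_sub_left, hinner]
      rw [inner_self_eq_norm_sq_to_K, inner_self_eq_norm_sq_to_K, hiso x, sub_self]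
    have hz' : (adjoint P * P - 1 : H →L[ℂ] H) = 0 := by
      ext x
      simpa using LinearMap.congr_fun hz x
    exact sub_eq_zero.mp hz'
  refine ⟨h1, ?_⟩
  ext y
  obtain ⟨x, rfl⟩ := hsurj y
  have hx : (adjoint P * P) x = x := by rw [h1]; rfl
  calc (P * adjoint P) (P x) = P ((adjoint P * P) x) := rfl
  _ = P x := by rw [hx]

private lemma contraction_factor_unitary
    {H : Type*} [NormedAddCommGroup H] [InnerProductSpace ℂ H] [CompleteSpace H]
    (P Q : H →L[ℂ] H) (hP : ‖P‖ ≤ 1) (hQ : ‖Q‖ ≤ 1)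
    (hc : P * Q = Q * P)
    (h1 : adjoint (P * Q) * (P * Q) = 1) (h2 : (P * Q) * adjoint (P * Q) = 1) :
    adjoint P * P = 1 ∧ P * adjoint P = 1 := by
  set U := P * Q with hU
  have hUiso : ∀ x, ‖U x‖ = ‖x‖ := by
    intro x
    have hinner : ⟪U x, U x⟫_ℂ = ⟪x, x⟫_ℂ := by
      rw [← adjoint_inner_left]
      have : adjoint U (U x) = x := by
        have := congrArg (fun A : H →L[ℂ] H => A x) h1
        simpa using this
      rw [this]
    have := congrArg Complex.re hinner
    rw [inner_self_eq_norm_sq_to_K, inner_self_eq_norm_sq_to_K] at hinner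
    have hsq : ‖U x‖ ^ 2 = ‖x‖ ^ 2 := by exact_mod_cast hinner
    exact (sq_eq_sq₀ (norm_nonneg _) (norm_nonneg _)).mp hsq
  have hUsurj : Function.Surjective U := by
    intro y
    refine ⟨adjoint U y, ?_⟩
    have := congrArg (fun A : H →L[ℂ] H => A y) h2
    simpa using this
  have hQsurj : Function.Surjective Q := by
    intro y
    obtain ⟨x, hx⟩ := hUsurj y
    refine ⟨P x, ?_⟩
    have : U x = Q (P x) := by rw [hc]; rfl
    rw [← this, hx]
  have hPle : ∀ z, ‖P z‖ ≤ ‖z‖ := fun z => by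
    simpa using le_of_opNorm_le P hP z
  have hQle : ∀ z, ‖Q z‖ ≤ ‖z‖ := fun z => by
    simpa using le_of_opNorm_le Q hQ z
  have hQiso : ∀ x, ‖Q x‖ = ‖x‖ := by
    intro x
    refine le_antisymm (hQle x) ?_
    calc ‖x‖ = ‖U x‖ := (hUiso x).symm
    _ = ‖P (Q x)‖ := rfl
    _ ≤ ‖Q x‖ := hPle _
  have hPiso : ∀ y, ‖P y‖ = ‖y‖ := by
    intro y
    obtain ⟨x, rfl⟩ := hQsurj y
    calc ‖P (Q x)‖ = ‖U x‖ := rfl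
    _ = ‖x‖ := hUiso x
    _ = ‖Q x‖ := (hQiso x).symm
  have hPsurj : Function.Surjective P := by
    intro y
    obtain ⟨x, hx⟩ := hUsurj y
    exact ⟨Q x, hx⟩
  exact isometry_surj_unitary P hPiso hPsurj

private lemma unitary_list_prod
    {H : Type*} [NormedAddCommGroup H] [InnerProductSpace ℂ H] [CompleteSpace H]
    (l : List (H →L[ℂ] H)) (h : ∀ x ∈ l, adjoint x * x = 1 ∧ x * adjoint x = 1) :
    adjoint l.prod * l.prod = 1 ∧ l.prod * adjoint l.prod = 1 := by
  induction l with
  | nil => simp [← star_eq_adjoint]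
  | cons a l ih =>
    obtain ⟨ha1, ha2⟩ := h a List.mem_cons_self
    obtain ⟨hl1, hl2⟩ := ih fun x hx => h x (List.mem_cons_of_mem _ hx)
    have hadj : adjoint (a * l.prod) = adjoint l.prod * adjoint a := by
      rw [← star_eq_adjoint, ← star_eq_adjoint, ← star_eq_adjoint, star_mul]
    constructor
    · rw [List.prod_cons, hadj]
      calc adjoint l.prod * adjoint a * (a * l.prod)
          = adjoint l.prod * (adjoint a * a) * l.prod := by noncomm_ring
        _ = adjoint l.prod * l.prod := by rw [ha1]; noncomm_ring
        _ = 1 := hl1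
    · rw [List.prod_cons, hadj]
      calc a * l.prod * (adjoint l.prod * adjoint a)
          = a * (l.prod * adjoint l.prod) * adjoint a := by noncomm_ring
        _ = a * adjoint a := by rw [hl2]; noncomm_ring
        _ = 1 := ha2

theorem finite_product_unitary_iff_each_unitary
    {H : Type*} [NormedAddCommGroup H] [InnerProductSpace ℂ H] [CompleteSpace H]
    (n : ℕ) (P : Fin n → (H →L[ℂ] H))
    (hnorm : ∀ i, ‖P i‖ ≤ 1)
    (hcomm : ∀ i j, P i * P j = P j * P i) :
    (adjoint (List.ofFn P).prod * (List.ofFn P).prod = 1 ∧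
      (List.ofFn P).prod * adjoint (List.ofFn P).prod = 1) ↔
    ∀ i, adjoint (P i) * P i = 1 ∧ P i * adjoint (P i) = 1 := by
  classical
  constructor
  · rintro ⟨h1, h2⟩ i
    set l := List.ofFn P with hl
    have hmem : P i ∈ l := List.mem_ofFn.mpr ⟨i, rfl⟩
    have hpair : l.Pairwise Commute := by
      rw [hl, List.pairwise_ofFn]
      intro j k _
      exact hcomm j k
    have hperm : List.Perm l (P i :: l.erase (P i)) := List.perm_cons_erase hmem
    have hprodeq : l.prod = P i * (l.erase (P i)).prod := by
      rw [hperm.prod_eq' hpair, List.prod_cons]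
    set Q := (l.erase (P i)).prod with hQdef
    have hQnorm : ‖Q‖ ≤ 1 := by
      apply list_prod_norm_le_one
      intro x hx
      have : x ∈ l := List.erase_sublist.mem hx
      obtain ⟨j, rfl⟩ := List.mem_ofFn.mp this
      exact hnorm j
    have hcPQ : P i * Q = Q * P i := by
      have : Commute (P i) Q := by
        apply Commute.list_prod_right
        intro x hx
        have : x ∈ l := List.erase_sublist.mem hx
        obtain ⟨j, rfl⟩ := List.mem_ofFn.mp this
        exact hcomm i j
      exact this
    rw [hprodeq] at h1 h2
    exact contraction_factor_unitary (P i) Q (hnorm i) hQnorm hcPQ h1 h2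
  · intro h
    apply unitary_list_prod
    intro x hx
    obtain ⟨j, rfl⟩ := List.mem_ofFn.mp hx
    exact h j
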